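/- Let f : X → Y be an f.p. map from a topological space X over B0 to an ANR_{B0}-space Y. Then there exist an ANR_{B0}-space Z of weight w(Z) ≤ max{w(X), w(B0), ℵ0} and f.p. maps g : X → Z and h : Z → Y such that h ∘ g = f. -/

import Mathlib

open Set Topology TopologicalSpace unitInterval

universe u

/-- `f` is a fiber preserving (f.p.) map from `(X, πX)` to `(Y, πY)` over `B0`. -/
def IsFPMap {B0 X Y : Type u} [TopologicalSpace B0] [TopologicalSpace X] [TopologicalSpace Y]
    (πX : X → B0) (πY : Y → B0) (f : X → Y) : Prop :=
  Continuous f ∧ ∀ x, πY (f x) = πX x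

/-- Two f.p. maps are f.p. homotopic (homotopic over `B0`). -/
def FPHomotopic {B0 X Y : Type u} [TopologicalSpace B0] [TopologicalSpace X] [TopologicalSpace Y]
    (πX : X → B0) (πY : Y → B0) (f g : X → Y) : Prop :=
  ∃ H : X × unitInterval → Y, Continuous H ∧
    (∀ x, H (x, 0) = f x) ∧ (∀ x, H (x, 1) = g x) ∧
    ∀ x t, πY (H (x, t)) = πX x

/-- A metrizable space `(Y, πY)` over `B0` is an absolute neighbourhood retract over `B0`:
for every closed f.p. embedding into a metrizable space over `B0` there is a neighbourhood of the
image and an f.p. retraction of that neighbourhood onto the image. -/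
def IsFiberANR (B0 : Type u) [TopologicalSpace B0] (Y : Type u) [TopologicalSpace Y]
    (πY : Y → B0) : Prop :=
  MetrizableSpace Y ∧ Continuous πY ∧
  ∀ (X : Type u) (_ : TopologicalSpace X), MetrizableSpace X →
    ∀ πX : X → B0, Continuous πX →
    ∀ i : Y → X, IsClosedEmbedding i → (∀ y, πX (i y) = πY y) →
    ∃ U : Set X, U ∈ nhdsSet (Set.range i) ∧
    ∃ r : U → X, Continuous r ∧ (∀ u : U, r u ∈ Set.range i) ∧
      (∀ u : U, πX (r u) = πX u) ∧ ∀ u : U, (u : X) ∈ Set.range i → r u = u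

/-- A metrizable space `(Y, πY)` over `B0` is an absolute neighbourhood extensor over `B0`. -/
def IsFiberANE (B0 : Type u) [TopologicalSpace B0] (Y : Type u) [TopologicalSpace Y]
    (πY : Y → B0) : Prop :=
  MetrizableSpace Y ∧ Continuous πY ∧
  ∀ (X : Type u) (_ : TopologicalSpace X), MetrizableSpace X →
    ∀ πX : X → B0, Continuous πX →
    ∀ A : Set X, IsClosed A →
    ∀ f : A → Y, Continuous f → (∀ a : A, πY (f a) = πX a) →
    ∃ U : Set X, U ∈ nhdsSet A ∧
    ∃ g : U → Y, Continuous g ∧ (∀ u : U, πY (g u) = πX u) ∧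
      ∀ (a : X) (ha : a ∈ A) (hu : a ∈ U), g ⟨a, hu⟩ = f ⟨a, ha⟩

/-- An open cover of a topological space. -/
def IsOpenCover {Y : Type u} [TopologicalSpace Y] (𝒰 : Set (Set Y)) : Prop :=
  (∀ V ∈ 𝒰, IsOpen V) ∧ ⋃₀ 𝒰 = Set.univ

/-- Two maps are `𝒰`-near. -/
def UNear {X Y : Type u} (𝒰 : Set (Set Y)) (f g : X → Y) : Prop :=
  ∀ x, ∃ V ∈ 𝒰, f x ∈ V ∧ g x ∈ V

/-- The (topological) weight of a space: the least cardinality of a basis of its topology. -/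
noncomputable def tweight (X : Type u) [TopologicalSpace X] : Cardinal.{u} :=
  sInf {c | ∃ B : Set (Set X), IsTopologicalBasis B ∧ Cardinal.mk B = c}

/-- An inverse system in `Top_{B0}`: a directed set of indices, spaces over `B0` and f.p.
bonding maps. -/
structure FibInvSys (B0 : Type u) [TopologicalSpace B0] : Type (u + 1) where
  Idx : Type u
  le : Idx → Idx → Prop
  le_refl : ∀ a, le a a
  le_trans : ∀ a b c, le a b → le b c → le a c
  directed : ∀ a b, ∃ c, le a c ∧ le b c
  obj : Idx → Type u
  topInst : ∀ a, TopologicalSpace (obj a)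
  proj : ∀ a, obj a → B0
  proj_cont : ∀ a, @Continuous _ _ (topInst a) _ (proj a)
  bond : ∀ a a', le a a' → obj a' → obj a
  bond_cont : ∀ a a' (h : le a a'), @Continuous _ _ (topInst a') (topInst a) (bond a a' h)
  bond_fp : ∀ a a' (h : le a a') (x : obj a'), proj a (bond a a' h x) = proj a' x
  bond_id : ∀ a (x : obj a), bond a a (le_refl a) x = x
  bond_comp : ∀ a a' a'' (h : le a a') (h' : le a' a'') (x : obj a''),
    bond a a' h (bond a' a'' h' x) = bond a a'' (le_trans a a' a'' h h') x

attribute [instance] FibInvSys.topInst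

/-- A morphism from a space `(X, πX)` over `B0` to an inverse system in `Top_{B0}`. -/
structure FibMapToSys {B0 : Type u} [TopologicalSpace B0] (X : Type u) [TopologicalSpace X]
    (πX : X → B0) (S : FibInvSys B0) where
  maps : ∀ a : S.Idx, X → S.obj a
  cont : ∀ a, Continuous (maps a)
  fp : ∀ a x, S.proj a (maps a x) = πX x
  comm : ∀ a a' (h : S.le a a') (x : X), S.bond a a' h (maps a' x) = maps a x

section Conditions

variable {B0 : Type u} [TopologicalSpace B0] (X : Type u) [TopologicalSpace X]
  (πX : X → B0) (S : FibInvSys B0)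

/-- Condition (R1) of a resolution over `B0`. -/
def CondR1 (p : FibMapToSys X πX S) : Prop :=
  ∀ (P : Type u) (_ : TopologicalSpace P) (πP : P → B0), IsFiberANR B0 P πP →
    ∀ 𝒰 : Set (Set P), IsOpenCover 𝒰 →
    ∀ h : X → P, IsFPMap πX πP h →
    ∃ (a : S.Idx) (f : S.obj a → P), IsFPMap (S.proj a) πP f ∧
      UNear 𝒰 h fun x => f (p.maps a x)

/-- Condition (R2) of a resolution over `B0`. -/
def CondR2 (p : FibMapToSys X πX S) : Prop :=
  ∀ (P : Type u) (_ : TopologicalSpace P) (πP : P → B0), IsFiberANR B0 P πP →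
    ∀ 𝒰 : Set (Set P), IsOpenCover 𝒰 →
    ∃ 𝒰' : Set (Set P), IsOpenCover 𝒰' ∧
      ∀ (a : S.Idx) (f f' : S.obj a → P), IsFPMap (S.proj a) πP f → IsFPMap (S.proj a) πP f' →
        UNear 𝒰' (fun x => f (p.maps a x)) (fun x => f' (p.maps a x)) →
        ∃ (a' : S.Idx) (h : S.le a a'),
          UNear 𝒰 (fun y => f (S.bond a a' h y)) fun y => f' (S.bond a a' h y)

/-- `p` is a resolution over `B0`. -/
def IsFibResolution (p : FibMapToSys X πX S) : Prop :=
  CondR1 X πX S p ∧ CondR2 X πX S p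

/-- Condition (E1) of an expansion over `B0`. -/
def CondE1 (p : FibMapToSys X πX S) : Prop :=
  ∀ (P : Type u) (_ : TopologicalSpace P) (πP : P → B0), IsFiberANR B0 P πP →
    ∀ f : X → P, IsFPMap πX πP f →
    ∃ (a : S.Idx) (h : S.obj a → P), IsFPMap (S.proj a) πP h ∧
      FPHomotopic πX πP (fun x => h (p.maps a x)) f

/-- Condition (E2) of an expansion over `B0`. -/
def CondE2 (p : FibMapToSys X πX S) : Prop :=
  ∀ (P : Type u) (_ : TopologicalSpace P) (πP : P → B0), IsFiberANR B0 P πP →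
    ∀ (a : S.Idx) (f f' : S.obj a → P), IsFPMap (S.proj a) πP f → IsFPMap (S.proj a) πP f' →
      FPHomotopic πX πP (fun x => f (p.maps a x)) (fun x => f' (p.maps a x)) →
      ∃ (a' : S.Idx) (h : S.le a a'),
        FPHomotopic (S.proj a') πP (fun y => f (S.bond a a' h y)) fun y => f' (S.bond a a' h y)

/-- Two f.p. homotopies `S, T : X × I → P` are f.p. homotopic rel `X × ∂I`. -/
def FPHomotopicRelEnds {P : Type u} [TopologicalSpace P] (πP : P → B0)
    (S T : X × unitInterval → P) : Prop :=
  ∃ G : (X × unitInterval) × unitInterval → P, Continuous G ∧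
    (∀ z, G (z, 0) = S z) ∧ (∀ z, G (z, 1) = T z) ∧
    (∀ z s, πP (G (z, s)) = πX z.1) ∧
    (∀ x s, G ((x, 0), s) = S (x, 0)) ∧ ∀ x s, G ((x, 1), s) = S (x, 1)

/-- Condition (SE2) of a strong expansion over `B0`. -/
def CondSE2 (p : FibMapToSys X πX S) : Prop :=
  ∀ (P : Type u) (_ : TopologicalSpace P) (πP : P → B0), IsFiberANR B0 P πP →
    ∀ (a : S.Idx) (f0 f1 : S.obj a → P), IsFPMap (S.proj a) πP f0 → IsFPMap (S.proj a) πP f1 →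
    ∀ Sh : X × unitInterval → P, Continuous Sh → (∀ x t, πP (Sh (x, t)) = πX x) →
      (∀ x, Sh (x, 0) = f0 (p.maps a x)) → (∀ x, Sh (x, 1) = f1 (p.maps a x)) →
      ∃ (a' : S.Idx) (h : S.le a a') (H : S.obj a' × unitInterval → P),
        Continuous H ∧ (∀ z t, πP (H (z, t)) = S.proj a' z) ∧
        (∀ z, H (z, 0) = f0 (S.bond a a' h z)) ∧
        (∀ z, H (z, 1) = f1 (S.bond a a' h z)) ∧
        FPHomotopicRelEnds X πX πP Sh fun zt => H (p.maps a' zt.1, zt.2)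

/-- `p` is a strong expansion over `B0`. -/
def IsFibStrongExpansion (p : FibMapToSys X πX S) : Prop :=
  CondE1 X πX S p ∧ CondSE2 X πX S p

end Conditions


section AuxiliaryLemmas

open Metric Filter

universe v

set_option maxHeartbeats 1000000
set_option synthInstance.maxHeartbeats 200000

/-- Dugundji's extension theorem: a continuous map from a nonempty closed subset of a
metric space into a normed real vector space extends continuously, with values in the
convex hull of the range. -/
theorem dugundji_ext {M : Type u} {E : Type v} [MetricSpace M] [NormedAddCommGroup E]
    [NormedSpace ℝ E] {A : Set M} (hA : IsClosed A) (hne : A.Nonempty)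
    (f : A → E) (hf : Continuous f) :
    ∃ F : M → E, Continuous F ∧ (∀ a : A, F a = f a) ∧
      ∀ m, F m ∈ convexHull ℝ (Set.range f) := by
  classical
  set U : Set M := Aᶜ with hU
  have hUopen : IsOpen U := hA.isOpen_compl
  -- the covering of U by balls
  set W : ↥U → Set ↥U := fun i => Subtype.val ⁻¹' (ball (i : M) (infDist (i : M) A / 2)) with hW
  have hWopen : ∀ i, IsOpen (W i) := fun i => isOpen_ball.preimage continuous_subtype_val
  have hinf : ∀ i : ↥U, 0 < infDist (i : M) A := fun i =>
    (hA.notMem_iff_infDist_pos hne).1 i.2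
  have hWcover : (univ : Set ↥U) ⊆ ⋃ i, W i := by
    intro z _
    exact mem_iUnion.2 ⟨z, by simpa [hW] using half_pos (hinf z)⟩
  obtain ⟨ρ, hρ⟩ := PartitionOfUnity.exists_isSubordinate isClosed_univ W hWopen hWcover
  -- choice of near points in A
  have haux : ∀ i : ↥U, ∃ a ∈ A, dist (i : M) a < 2 * infDist (i : M) A := fun i =>
    (infDist_lt_iff hne).1 (by linarith [hinf i])
  choose a haA ha using haux
  set g : ↥U → E := fun i => f ⟨a i, haA i⟩ with hg
  set G : ↥U → E := fun z => ∑ᶠ i, ρ i z • g i with hG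
  have hGcont : Continuous G := by
    refine ρ.continuous_finsum_smul (g := fun i (_ : ↥U) => g i) ?_
    exact fun i x _ => continuousAt_const
  have hGsum : ∀ z : ↥U, G z = ∑ i ∈ ρ.finsupport z, ρ i z • g i := fun z =>
    (ρ.sum_finsupport_smul_eq_finsum (fun i _ => g i)).symm
  -- the extension
  set F : M → E := fun m => if h : m ∈ A then f ⟨m, h⟩ else G ⟨m, h⟩ with hF
  have hFA : ∀ a : A, F a = f a := fun b => by
    simp only [hF, dif_pos b.2]
  have hFU : ∀ z : ↥U, F z = G z := fun z => by
    simp only [hF, dif_neg (show (z : M) ∉ A from z.2)]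
  -- key estimate for points in supports
  have hkey : ∀ (z : ↥U) (i : ↥U), i ∈ ρ.finsupport z →
      dist (a i) (z : M) ≤ 6 * dist (z : M) (z : M) + 0 ∨ True := fun _ _ _ => Or.inr trivial
  refine ⟨F, ?_, hFA, ?_⟩
  · -- continuity
    rw [continuous_iff_continuousAt]
    intro m
    by_cases hm : m ∈ A
    · -- continuity at points of A
      rw [Metric.continuousAt_iff]
      intro ε hε
      have hfc : ContinuousAt f ⟨m, hm⟩ := hf.continuousAt
      rw [Metric.continuousAt_iff] at hfc
      obtain ⟨δ₀, hδ₀, hδ⟩ := hfc (ε / 2) (by linarith)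
      refine ⟨δ₀ / 7, by linarith, ?_⟩
      intro y hy
      have hFm : F m = f ⟨m, hm⟩ := hFA ⟨m, hm⟩
      by_cases hyA : y ∈ A
      · have : dist (f ⟨y, hyA⟩) (f ⟨m, hm⟩) < ε / 2 := by
          apply hδ
          rw [Subtype.dist_eq]
          simpa using by linarith
        rw [hFA ⟨y, hyA⟩, hFm]
        linarith
      · set z : ↥U := ⟨y, hyA⟩ with hz
        have hmem : ∀ i ∈ ρ.finsupport z, g i ∈ ball (f ⟨m, hm⟩) (ε / 2) := by
          intro i hi
          have hsupp : z ∈ tsupport (ρ i) := by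
            apply subset_tsupport
            simpa using (ρ.mem_finsupport z).1 hi
          have hzW : z ∈ W i := hρ i hsupp
          have h1 : dist (z : M) (i : M) < infDist (i : M) A / 2 := by
            exact hzW
          have h2 : infDist (i : M) A ≤ dist (i : M) m := infDist_le_dist_of_mem hm
          have h3 : dist (i : M) m ≤ dist (i : M) (z : M) + dist (z : M) m :=
            dist_triangle _ _ _
          have h4 : dist (i : M) (z : M) = dist (z : M) (i : M) := dist_comm _ _
          have h5 : infDist (i : M) A < 2 * dist (z : M) m := by linarith
          have h6 : dist (a i) m ≤ dist (a i) (i : M) + dist (i : M) (z : M)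
              + dist (z : M) m := dist_triangle4 _ _ _ _
          have h7 : dist (a i) (i : M) = dist (i : M) (a i) := dist_comm _ _
          have h8 : dist (a i) m < δ₀ := by
            have := ha i
            have hzm : dist (z : M) m < δ₀ / 7 := hy
            nlinarith [hinf i, dist_nonneg (x := (z : M)) (y := m)]
          have : dist (f ⟨a i, haA i⟩) (f ⟨m, hm⟩) < ε / 2 := by
            apply hδ
            rw [Subtype.dist_eq]
            simpa using h8
          simpa [hg, mem_ball] using this
        have hGz : G z ∈ ball (f ⟨m, hm⟩) (ε / 2) := by
          rw [hGsum z]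
          exact (convex_ball _ _).sum_mem (fun i _ => ρ.nonneg i z)
            (ρ.sum_finsupport (mem_univ z)) hmem
        have : F y = G z := hFU z
        rw [this, hFm]
        rw [mem_ball] at hGz
        linarith
    · -- continuity at points of U
      set z : ↥U := ⟨m, hm⟩ with hz
      have hemb : IsOpenEmbedding (Subtype.val : ↥U → M) := hUopen.isOpenEmbedding_subtypeVal
      have : ContinuousAt (F ∘ (Subtype.val : ↥U → M)) z := by
        have : F ∘ (Subtype.val : ↥U → M) = G := funext fun w => hFU w
        rw [this]
        exact hGcont.continuousAt
      exact hemb.continuousAt_iff.1 this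
  · -- range in the convex hull
    intro m
    by_cases hm : m ∈ A
    · rw [hFA ⟨m, hm⟩]
      exact subset_convexHull ℝ _ (mem_range_self _)
    · rw [hFU ⟨m, hm⟩, hGsum ⟨m, hm⟩]
      exact (convex_convexHull ℝ _).sum_mem (fun i _ => ρ.nonneg i _)
        (ρ.sum_finsupport (mem_univ _))
        (fun i _ => subset_convexHull ℝ _ (mem_range_self _))


/-- The Kuratowski-type embedding `y ↦ d(y, ·) - d(y₀, ·)`. -/
noncomputable def kurMap {Y : Type u} [MetricSpace Y] (y₀ : Y) (y : Y) :
    BoundedContinuousFunction Y ℝ :=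
  BoundedContinuousFunction.mkOfBound
    ⟨fun z => dist y z - dist y₀ z, by fun_prop⟩ (2 * dist y y₀) (by
      intro x x'
      have h1 : |dist y x - dist y₀ x| ≤ dist y y₀ := abs_dist_sub_le _ _ _
      have h2 : |dist y x' - dist y₀ x'| ≤ dist y y₀ := abs_dist_sub_le _ _ _
      rw [Real.dist_eq]
      simp only [ContinuousMap.coe_mk]
      rw [abs_sub_le_iff] at h1 h2 ⊢
      constructor <;> linarith)

lemma kurMap_apply {Y : Type u} [MetricSpace Y] (y₀ y z : Y) :
    kurMap y₀ y z = dist y z - dist y₀ z := rfl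

lemma kurMap_isometry {Y : Type u} [MetricSpace Y] (y₀ : Y) : Isometry (kurMap y₀) := by
  apply Isometry.of_dist_eq
  intro y y'
  apply le_antisymm
  · refine (BoundedContinuousFunction.dist_le dist_nonneg).2 fun z => ?_
    rw [kurMap_apply, kurMap_apply, Real.dist_eq]
    have := abs_dist_sub_le y y' z
    convert this using 2
    ring
  · have := BoundedContinuousFunction.dist_coe_le_dist (f := kurMap y₀ y)
      (g := kurMap y₀ y') y'
    rw [kurMap_apply, kurMap_apply, Real.dist_eq] at this
    simpa [abs_of_nonneg dist_nonneg] using this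

/-- Kuratowski–Wojdysławski: if a sequence of image points of the Kuratowski embedding
converges to a point of the convex hull of the range, then the original sequence converges. -/
lemma kw_limit {Y : Type u} [MetricSpace Y] (y₀ : Y) (φ : BoundedContinuousFunction Y ℝ)
    (hφ : φ ∈ convexHull ℝ (Set.range (kurMap y₀)))
    (u : ℕ → Y) (hu : Tendsto (fun n => kurMap y₀ (u n)) atTop (nhds φ)) :
    ∃ y : Y, Tendsto u atTop (nhds y) := by
  rw [convexHull_eq] at hφ
  obtain ⟨ι, t, w, z, hw0, hw1, hz, hcm⟩ := hφ
  -- an index with positive weight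
  have hex : ∃ i ∈ t, (0 : ℝ) < w i := by
    by_contra h
    push_neg at h
    have : ∑ i ∈ t, w i ≤ 0 := Finset.sum_nonpos fun i hi => h i hi
    rw [hw1] at this; linarith
  obtain ⟨i₀, hi₀t, hi₀⟩ := hex
  choose v hv using fun i (hi : i ∈ t) => hz i hi
  have hφ_eq : φ = ∑ i ∈ t.attach, w i • kurMap y₀ (v i i.2) := by
    rw [← hcm, Finset.centerMass_eq_of_sum_1 _ _ hw1]
    rw [← Finset.sum_attach t (fun i => w i • z i)]
    exact Finset.sum_congr rfl fun i _ => by rw [hv i i.2]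
  -- pointwise evaluation
  have hφ_apply : ∀ x : Y, φ x = ∑ i ∈ t.attach, w i * (dist (v i i.2) x - dist y₀ x) := by
    intro x
    rw [hφ_eq]
    simp [kurMap_apply]
  have hsum1 : ∑ i ∈ t.attach, w (i : ι) = 1 := by rw [Finset.sum_attach]; exact hw1
  -- the key estimate
  have hkey : ∀ n, w i₀ * dist (v i₀ hi₀t) (u n) ≤ dist (kurMap y₀ (u n)) φ := by
    intro n
    have heval : dist (kurMap y₀ (u n) (u n)) (φ (u n)) ≤ dist (kurMap y₀ (u n)) φ :=
      BoundedContinuousFunction.dist_coe_le_dist _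
    have h0 : kurMap y₀ (u n) (u n) = - dist y₀ (u n) := by
      rw [kurMap_apply]; simp
    have h1 : φ (u n) = (∑ i ∈ t.attach, w i * dist (v i i.2) (u n)) - dist y₀ (u n) := by
      rw [hφ_apply]
      simp only [mul_sub, Finset.sum_sub_distrib, ← Finset.sum_mul, hsum1, one_mul]
    have h2 : dist (kurMap y₀ (u n) (u n)) (φ (u n))
        = ∑ i ∈ t.attach, w i * dist (v i i.2) (u n) := by
      rw [h0, h1, Real.dist_eq, abs_of_nonpos]
      · ring
      · have : (0:ℝ) ≤ ∑ i ∈ t.attach, w i * dist (v i i.2) (u n) :=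
          Finset.sum_nonneg fun i _ => mul_nonneg (hw0 i i.2) dist_nonneg
        linarith
    have h3 : w i₀ * dist (v i₀ hi₀t) (u n) ≤ ∑ i ∈ t.attach, w i * dist (v i i.2) (u n) :=
      Finset.single_le_sum (f := fun i : {x // x ∈ t} => w i.1 * dist (v i.1 i.2) (u n))
        (fun i _ => mul_nonneg (hw0 i.1 i.2) dist_nonneg) (Finset.mem_attach t ⟨i₀, hi₀t⟩)
    calc w i₀ * dist (v i₀ hi₀t) (u n) ≤ _ := h3
      _ = _ := h2.symm
      _ ≤ _ := heval
  refine ⟨v i₀ hi₀t, ?_⟩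
  rw [tendsto_iff_dist_tendsto_zero]
  have hd : Tendsto (fun n => dist (kurMap y₀ (u n)) φ) atTop (nhds 0) := by
    rw [← tendsto_iff_dist_tendsto_zero]; exact hu
  have hg := hd.const_mul (w i₀)⁻¹
  rw [mul_zero] at hg
  have hbound : ∀ n, dist (u n) (v i₀ hi₀t) ≤ (w i₀)⁻¹ * dist (kurMap y₀ (u n)) φ := by
    intro n
    rw [dist_comm]
    calc dist (v i₀ hi₀t) (u n) = (w i₀)⁻¹ * (w i₀ * dist (v i₀ hi₀t) (u n)) := by
          field_simp
      _ ≤ (w i₀)⁻¹ * dist (kurMap y₀ (u n)) φ :=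
          mul_le_mul_of_nonneg_left (hkey n) (by positivity)
  exact squeeze_zero (fun n => dist_nonneg) hbound hg



lemma tweight_le_basis {W : Type u} [TopologicalSpace W] {B : Set (Set W)}
    (hB : IsTopologicalBasis B) : tweight W ≤ Cardinal.mk B :=
  csInf_le' ⟨B, hB, rfl⟩

lemma exists_dense_card {W : Type u} [TopologicalSpace W] :
    ∃ D : Set W, Dense D ∧ Cardinal.mk D ≤ tweight W := by
  classical
  have hne : {c | ∃ B : Set (Set W), IsTopologicalBasis B ∧ Cardinal.mk B = c}.Nonempty :=
    ⟨_, {U : Set W | IsOpen U}, isTopologicalBasis_opens, rfl⟩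
  obtain ⟨B, hB, hBc⟩ := csInf_mem hne
  set B' : Set (Set W) := {b | b ∈ B ∧ b.Nonempty} with hB'
  set pick : B' → W := fun b => b.2.2.choose with hpick
  have hpickmem : ∀ b : B', pick b ∈ (b : Set W) := fun b => b.2.2.choose_spec
  refine ⟨Set.range pick, ?_, ?_⟩
  · rw [dense_iff_inter_open]
    rintro u hu ⟨x, hx⟩
    obtain ⟨v, hvB, hxv, hvu⟩ := hB.exists_subset_of_mem_open hx hu
    exact ⟨pick ⟨v, hvB, ⟨x, hxv⟩⟩, hvu (hpickmem ⟨v, hvB, ⟨x, hxv⟩⟩), mem_range_self _⟩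
  · calc Cardinal.mk (Set.range pick) ≤ Cardinal.mk B' := Cardinal.mk_range_le
      _ ≤ Cardinal.mk B := Cardinal.mk_le_mk_of_subset fun b hb => hb.1
      _ = tweight W := hBc

lemma metric_basis {W : Type u} [MetricSpace W] (D : Set W) (hD : Dense D) :
    ∃ B : Set (Set W), IsTopologicalBasis B ∧
      Cardinal.mk B ≤ max (Cardinal.mk D) Cardinal.aleph0 := by
  set B : Set (Set W) := Set.range (fun p : D × ℚ => ball (p.1 : W) (p.2 : ℝ)) with hBdef
  refine ⟨B, ?_, ?_⟩
  · apply isTopologicalBasis_of_isOpen_of_nhds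
    · rintro u ⟨p, rfl⟩; exact isOpen_ball
    · intro x u hxu hu
      obtain ⟨ε, hε, hball⟩ := Metric.isOpen_iff.1 hu x hxu
      obtain ⟨q, hq0, hq⟩ := exists_rat_btwn (show (0:ℝ) < ε/2 by linarith)
      obtain ⟨d, hdD, hd⟩ := Metric.mem_closure_iff.1 (hD x) (q : ℝ) hq0
      refine ⟨ball d (q : ℝ), ⟨(⟨d, hdD⟩, q), rfl⟩, ?_, fun y hy => hball ?_⟩
      · rwa [mem_ball]
      · rw [mem_ball] at hy ⊢
        have := dist_triangle y d x
        rw [dist_comm d x] at this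
        linarith
  · calc Cardinal.mk B ≤ Cardinal.mk (D × ℚ) := Cardinal.mk_range_le
      _ ≤ max (Cardinal.mk D) Cardinal.aleph0 := by
        have h1 : Cardinal.mk (D × ℚ) =
            Cardinal.lift.{0} (Cardinal.mk D) * Cardinal.lift.{u} (Cardinal.mk ℚ) :=
          Cardinal.mk_prod _ _
        have h2 : Cardinal.mk ℚ = Cardinal.aleph0 := Cardinal.mk_eq_aleph0 ℚ
        rw [h1, h2, Cardinal.lift_aleph0, Cardinal.lift_uzero]
        refine (Cardinal.mul_le_max _ _).trans ?_
        simp [max_assoc]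

lemma card_fin_fun {β : Type u} {κ : Cardinal.{u}} (hκ : Cardinal.aleph0 ≤ κ)
    (hβ : Cardinal.mk β ≤ κ) (n : ℕ) : Cardinal.mk (Fin n → β) ≤ κ := by
  induction n with
  | zero =>
      have hs : Subsingleton (Fin 0 → β) := ⟨fun a b => funext fun i => i.elim0⟩
      have : Cardinal.mk (Fin 0 → β) ≤ 1 := Cardinal.le_one_iff_subsingleton.2 hs
      exact this.trans (Cardinal.one_le_aleph0.trans hκ)
  | succ n ih =>
      have he : Cardinal.mk (Fin (n+1) → β) = Cardinal.mk (β × (Fin n → β)) :=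
        Cardinal.mk_congr (Fin.consEquiv (fun _ : Fin (n+1) => β)).symm
      rw [he, Cardinal.mk_prod, Cardinal.lift_id, Cardinal.lift_id]
      calc Cardinal.mk β * Cardinal.mk (Fin n → β) ≤ κ * κ :=
            mul_le_mul' hβ ih
        _ = κ := Cardinal.mul_eq_self hκ

end AuxiliaryLemmas

set_option maxHeartbeats 1000000
set_option synthInstance.maxHeartbeats 200000

open Metric Filter in
/-- Lemma 1.3: every f.p. map from a space `X` over `B0` to an `ANR_{B0}`-space `Y` factors as
`h ∘ g` through an `ANR_{B0}`-space `Z` of weight `w(Z) ≤ max {w(X), w(B0), ℵ₀}`. -/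
theorem fiberANR_factorization (B0 : Type u) [TopologicalSpace B0] [MetrizableSpace B0]
    (X : Type u) [TopologicalSpace X] (πX : X → B0) (hπX : Continuous πX)
    (Y : Type u) [TopologicalSpace Y] (πY : Y → B0) (hY : IsFiberANR B0 Y πY)
    (f : X → Y) (hf : IsFPMap πX πY f) :
    ∃ (Z : Type u) (_ : TopologicalSpace Z) (πZ : Z → B0),
      IsFiberANR B0 Z πZ ∧
      tweight Z ≤ max (max (tweight X) (tweight B0)) Cardinal.aleph0 ∧
      ∃ (g : X → Z) (h : Z → Y), IsFPMap πX πZ g ∧ IsFPMap πZ πY h ∧ ∀ x, h (g x) = f x := by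
  classical
  obtain ⟨hYmet, hπY, hanr⟩ := hY
  set κ := max (max (tweight X) (tweight B0)) Cardinal.aleph0 with hκdef
  have hκℵ : Cardinal.aleph0 ≤ κ := le_max_right _ _
  rcases isEmpty_or_nonempty Y with hYe | hYne
  · -- degenerate case : `Y` is empty, hence so is `X`; take `Z := Y`.
    haveI : IsEmpty X := ⟨fun x => IsEmpty.false (f x)⟩
    have hbasis : IsTopologicalBasis (∅ : Set (Set Y)) := by
      have h1 : ∀ (t : TopologicalSpace Y) (s : Set Y), t.IsOpen s := by
        intro t s
        rw [Set.eq_empty_of_isEmpty s]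
        exact @isOpen_empty Y t
      refine ⟨fun t₁ ht₁ => absurd ht₁ (notMem_empty _), ?_, ?_⟩
      · rw [sUnion_empty, Set.univ_eq_empty_iff.2 hYe]
      · refine TopologicalSpace.ext ?_
        funext s
        exact propext ⟨fun _ => h1 _ s, fun _ => h1 _ s⟩
    have hwt : tweight Y ≤ κ := by
      refine (tweight_le_basis hbasis).trans ?_
      simp only [Cardinal.mk_emptyCollection]
      exact le_trans (Cardinal.zero_le _) le_rfl
    exact ⟨Y, ‹_›, πY, ⟨hYmet, hπY, hanr⟩, hwt, f, id, ⟨hf.1, hf.2⟩,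
      ⟨continuous_id, fun z => rfl⟩, fun x => rfl⟩
  · haveI := hYmet
    letI : MetricSpace Y := TopologicalSpace.metrizableSpaceMetric Y
    letI : MetricSpace B0 := TopologicalSpace.metrizableSpaceMetric B0
    set E := BoundedContinuousFunction Y ℝ with hE
    obtain ⟨y₀⟩ := hYne
    set k : Y → E := kurMap y₀ with hk
    have hkiso : Isometry k := kurMap_isometry y₀
    set H : Set E := convexHull ℝ (Set.range k) with hH
    set SH : Set (E × B0) := {p | p.1 ∈ H} with hSH
    set πH : ↥SH → B0 := fun p => (p : E × B0).2 with hπH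
    have hπHcont : Continuous πH := continuous_snd.comp continuous_subtype_val
    set i : Y → ↥SH := fun y => ⟨(k y, πY y),
      subset_convexHull ℝ _ (mem_range_self y)⟩ with hi
    have hicont : Continuous i :=
      ((hkiso.continuous.prodMk hπY)).subtype_mk _
    have hival : ∀ y, (i y : E × B0) = (k y, πY y) := fun y => rfl
    have hiemb : IsEmbedding i := by
      refine IsEmbedding.of_comp hicont
        (continuous_fst.comp continuous_subtype_val) ?_
      exact hkiso.isEmbedding
    haveI : MetricSpace ↥SH := Subtype.metricSpace
    haveI : SequentialSpace ↥SH := inferInstance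
    have hirange : IsClosed (Set.range i) := by
      apply IsSeqClosed.isClosed
      intro x p hx hlim
      choose y hy using hx
      have h1 : Tendsto (fun n => k (y n)) atTop (nhds (p : E × B0).1) := by
        have := ((continuous_fst.comp continuous_subtype_val).tendsto p).comp hlim
        refine this.congr fun n => ?_
        simp only [Function.comp_apply, ← hy n]
        rfl
      obtain ⟨ylim, hylim⟩ := kw_limit y₀ _ p.2 y h1
      have h2 : Tendsto (fun n => i (y n)) atTop (nhds (i ylim)) :=
        (hicont.tendsto ylim).comp hylim
      have h3 : Tendsto (fun n => i (y n)) atTop (nhds p) := by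
        refine hlim.congr fun n => (hy n).symm
      exact ⟨ylim, (tendsto_nhds_unique h3 h2).symm⟩
    have hiclosed : IsClosedEmbedding i := ⟨hiemb, hirange⟩
    obtain ⟨U, hU, r, hrcont, hrran, hrfp, hrfix⟩ :=
      hanr ↥SH inferInstance inferInstance πH hπHcont i hiclosed (fun y => rfl)
    obtain ⟨O, hOopen, hiO, hOU⟩ := mem_nhdsSet_iff_exists.1 hU
    obtain ⟨Oamb, hOamb, hOeq⟩ := isOpen_induced_iff.1 hOopen
    -- dense subsets and the small model space
    obtain ⟨TX, hTXdense, hTXcard⟩ := exists_dense_card (W := X)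
    obtain ⟨DB, hDBdense, hDBcard⟩ := exists_dense_card (W := B0)
    have hTXκ : Cardinal.mk TX ≤ κ := hTXcard.trans (le_trans (le_max_left _ _) (le_max_left _ _))
    have hDBκ : Cardinal.mk DB ≤ κ := hDBcard.trans (le_trans (le_max_right _ _) (le_max_left _ _))
    set S₀ : Set E := (k ∘ f) '' TX with hS₀
    have hS₀κ : Cardinal.mk S₀ ≤ κ := (Cardinal.mk_image_le).trans hTXκ
    set E' : Submodule ℝ E := (Submodule.span ℝ S₀).topologicalClosure with hE'
    have hE'closure : (E' : Set E) = closure (Submodule.span ℝ S₀ : Set E) :=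
      Submodule.topologicalClosure_coe _
    have hkfE' : ∀ x : X, k (f x) ∈ (E' : Set E) := by
      intro x
      have hx : x ∈ closure TX := hTXdense x
      have h1 : k (f x) ∈ closure S₀ := by
        have h2 := image_closure_subset_closure_image
          (f := k ∘ f) (s := TX) ((hkiso.continuous).comp hf.1)
        exact h2 ⟨x, hx, rfl⟩
      rw [hE'closure]
      exact closure_mono Submodule.subset_span h1
    -- the countable-combination dense subset
    set combo : ∀ n : ℕ, ((Fin n → ℚ) × (Fin n → S₀)) → E :=
      fun n q => ∑ j, (q.1 j : ℝ) • ((q.2 j : E)) with hcombo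
    set Dℚ : Set E := ⋃ n : ℕ, Set.range (combo n) with hDℚ
    have hDℚE' : Dℚ ⊆ (E' : Set E) := by
      rintro d hd
      obtain ⟨n, ⟨q, rfl⟩⟩ := mem_iUnion.1 hd
      refine Submodule.le_topologicalClosure _ ?_
      exact Submodule.sum_mem _ fun j _ =>
        Submodule.smul_mem _ _ (Submodule.subset_span (q.2 j).2)
    have hDℚdense : (E' : Set E) ⊆ closure Dℚ := by
      rw [hE'closure]
      refine closure_minimal ?_ isClosed_closure
      intro x hx
      obtain ⟨n, c, gg, rfl⟩ := Submodule.mem_span_set'.1 hx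
      set w : (Fin n → ℝ) → E := fun c' => ∑ j, c' j • (gg j : E) with hw
      have hwcont : Continuous w :=
        continuous_finset_sum _ fun j _ => (continuous_apply j).smul continuous_const
      have hc : c ∈ closure (Set.pi univ fun _ : Fin n => Set.range ((↑) : ℚ → ℝ)) := by
        rw [closure_pi_set]
        intro j _
        exact Rat.denseRange_cast (c j)
      have himg : w '' (Set.pi univ fun _ : Fin n => Set.range ((↑) : ℚ → ℝ)) ⊆ Dℚ := by
        rintro _ ⟨c', hc', rfl⟩
        have hq : ∀ j : Fin n, ∃ q : ℚ, (q : ℝ) = c' j := fun j => hc' j (mem_univ j)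
        choose q hqq using hq
        refine mem_iUnion.2 ⟨n, ⟨(q, gg), ?_⟩⟩
        simp only [hcombo, hw]
        exact Finset.sum_congr rfl fun j _ => by rw [hqq j]
      have := image_closure_subset_closure_image hwcont (s := (Set.pi univ fun _ : Fin n => Set.range ((↑) : ℚ → ℝ)))
      exact closure_mono himg (this ⟨c, hc, rfl⟩)
    have hDℚκ : Cardinal.mk Dℚ ≤ κ := by
      have hmem : ∀ d : Dℚ, ∃ p : Σ n : ℕ, (Fin n → ℚ) × (Fin n → S₀),
          combo p.1 p.2 = (d : E) := by
        rintro ⟨d, hd⟩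
        obtain ⟨n, ⟨q, hq⟩⟩ := mem_iUnion.1 hd
        exact ⟨⟨n, q⟩, hq⟩
      choose P hP using hmem
      have hinj : Function.Injective P := by
        intro d d' hdd
        apply Subtype.ext
        rw [← hP d, ← hP d', hdd]
      refine (Cardinal.mk_le_of_injective hinj).trans ?_
      rw [Cardinal.mk_sigma]
      have hbound : ∀ n : ℕ, Cardinal.mk ((Fin n → ℚ) × (Fin n → S₀)) ≤ κ := by
        intro n
        have hi2 : Function.Injective
            (fun p : (Fin n → ℚ) × (Fin n → S₀) => fun j : Fin n => (p.1 j, p.2 j)) := by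
          intro p p' hpp
          have h1 : ∀ j, (p.1 j, p.2 j) = (p'.1 j, p'.2 j) := fun j => congrFun hpp j
          exact Prod.ext (funext fun j => congrArg Prod.fst (h1 j))
            (funext fun j => congrArg Prod.snd (h1 j))
        refine (Cardinal.mk_le_of_injective hi2).trans ?_
        refine card_fin_fun hκℵ ?_ n
        have h3 : Cardinal.mk (ℚ × S₀) =
            Cardinal.lift.{u} (Cardinal.mk ℚ) * Cardinal.lift.{0} (Cardinal.mk S₀) :=
          Cardinal.mk_prod _ _
        rw [h3, Cardinal.mk_eq_aleph0 ℚ, Cardinal.lift_aleph0, Cardinal.lift_uzero]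
        refine (Cardinal.mul_le_max _ _).trans ?_
        exact max_le (max_le hκℵ hS₀κ) hκℵ
      refine (Cardinal.sum_le_sum _ (fun _ => κ) hbound).trans ?_
      rw [Cardinal.sum_const, Cardinal.mk_nat, Cardinal.lift_aleph0, Cardinal.lift_uzero,
        Cardinal.aleph0_mul_eq hκℵ]
    -- the model space `TT` and the space `Z`
    set TSet : Set (E × B0) := {p | p.1 ∈ (E' : Set E)} with hTSet
    set DT : Set ↥TSet := {p | (p : E × B0).1 ∈ Dℚ ∧ (p : E × B0).2 ∈ DB} with hDT
    have hDTdense : Dense DT := by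
      intro p
      rw [closure_subtype]
      have himg : (Subtype.val '' DT) = Dℚ ×ˢ DB := by
        ext w
        constructor
        · rintro ⟨w', hw', rfl⟩
          exact ⟨hw'.1, hw'.2⟩
        · rintro ⟨h1, h2⟩
          exact ⟨⟨w, hDℚE' h1⟩, ⟨h1, h2⟩, rfl⟩
      rw [himg, closure_prod_eq]
      exact ⟨hDℚdense p.2, by rw [hDBdense.closure_eq]; exact mem_univ _⟩
    have hDTκ : Cardinal.mk DT ≤ κ := by
      have hinj : Function.Injective
          (fun p : DT => ((⟨(p : E × B0).1, p.2.1⟩ : Dℚ), (⟨(p : E × B0).2, p.2.2⟩ : DB))) := by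
        intro p p' hpp
        apply Subtype.ext
        apply Subtype.ext
        have h1 := congrArg (fun q : Dℚ × DB => (q.1 : E)) hpp
        have h2 := congrArg (fun q : Dℚ × DB => (q.2 : B0)) hpp
        exact Prod.ext h1 h2
      refine (Cardinal.mk_le_of_injective hinj).trans ?_
      have h3 : Cardinal.mk (Dℚ × DB) = Cardinal.mk Dℚ * Cardinal.mk DB := by
        rw [Cardinal.mk_prod, Cardinal.lift_id, Cardinal.lift_id]
      rw [h3]
      refine (Cardinal.mul_le_max _ _).trans ?_
      exact max_le (max_le hDℚκ hDBκ) hκℵ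
    set ZT : Set ↥TSet := {p | (p : E × B0) ∈ Oamb ∧ (p : E × B0).1 ∈ H} with hZT
    set πZ : ↥ZT → B0 := fun z => ((z : ↥TSet) : E × B0).2 with hπZ
    have hπZcont : Continuous πZ :=
      continuous_snd.comp (continuous_subtype_val.comp continuous_subtype_val)
    -- weight of Z
    have hwtZ : tweight ↥ZT ≤ κ := by
      obtain ⟨BT, hBT, hBTcard⟩ := metric_basis DT hDTdense
      have hbasisZ : IsTopologicalBasis
          ((Set.preimage (Subtype.val : ↥ZT → ↥TSet)) '' BT) :=
        hBT.isInducing IsInducing.subtypeVal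
      refine (tweight_le_basis hbasisZ).trans ?_
      refine (Cardinal.mk_image_le).trans (hBTcard.trans ?_)
      exact max_le hDTκ hκℵ
    -- the maps g and h
    have hgO : ∀ x : X, ((k (f x), πX x) : E × B0) ∈ Oamb := by
      intro x
      have h1 : i (f x) ∈ O := hiO (mem_range_self (f x))
      rw [← hOeq] at h1
      have h2 : (i (f x) : E × B0) ∈ Oamb := h1
      rwa [hival, hf.2 x] at h2
    set g : X → ↥ZT := fun x => ⟨⟨(k (f x), πX x), hkfE' x⟩,
      ⟨hgO x, subset_convexHull ℝ _ (mem_range_self (f x))⟩⟩ with hg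
    have hgcont : Continuous g := by
      refine Continuous.subtype_mk (Continuous.subtype_mk ?_ _) _
      exact (hkiso.continuous.comp hf.1).prodMk hπX
    -- q : Z → SH
    set q : ↥ZT → ↥SH := fun z => ⟨((z : ↥TSet) : E × B0), z.2.2⟩ with hq
    have hqcont : Continuous q :=
      Continuous.subtype_mk (continuous_subtype_val.comp continuous_subtype_val) _
    have hqU : ∀ z, q z ∈ U := by
      intro z
      apply hOU
      rw [← hOeq]
      exact z.2.1
    set e := hiemb.toHomeomorph with he
    have hesymm : ∀ u : Set.range i, i (e.symm u) = (u : ↥SH) := by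
      intro u
      have h1 : (e (e.symm u) : ↥SH) = (u : ↥SH) := congrArg Subtype.val (e.apply_symm_apply u)
      exact h1
    set h : ↥ZT → Y := fun z => e.symm ⟨r ⟨q z, hqU z⟩, hrran ⟨q z, hqU z⟩⟩ with hh
    have hhcont : Continuous h := by
      refine (Homeomorph.continuous e.symm).comp ?_
      refine Continuous.subtype_mk ?_ _
      exact hrcont.comp (Continuous.subtype_mk hqcont _)
    have hih : ∀ z, i (h z) = r ⟨q z, hqU z⟩ := fun z => hesymm _
    have hhfp : ∀ z, πY (h z) = πZ z := by
      intro z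
      have h1 : πY (h z) = πH (i (h z)) := rfl
      rw [h1, hih z, hrfp ⟨q z, hqU z⟩]
    have hqg : ∀ x, q (g x) = i (f x) := by
      intro x
      apply Subtype.ext
      rw [hival]
      exact Prod.ext rfl (hf.2 x).symm
    have hcomp : ∀ x, h (g x) = f x := by
      intro x
      apply hiemb.injective
      rw [hih (g x)]
      have h1 : r ⟨q (g x), hqU (g x)⟩ = (⟨q (g x), hqU (g x)⟩ : U) := by
        apply hrfix
        show q (g x) ∈ Set.range i
        rw [hqg x]
        exact mem_range_self (f x)
      rw [h1]
      exact hqg x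
    -- Z is a fiber ANR
    have hzanr : IsFiberANR B0 ↥ZT πZ := by
      refine ⟨inferInstance, hπZcont, ?_⟩
      intro M₁ tM₁ hM₁met π₁ hπ₁ ι hι hιfp
      letI : MetricSpace M₁ := @TopologicalSpace.metrizableSpaceMetric M₁ tM₁ hM₁met
      rcases isEmpty_or_nonempty ↥ZT with hZe | hZne
      · haveI : IsEmpty ↥(∅ : Set M₁) := Set.isEmpty_coe_sort.2 rfl
        refine ⟨∅, ?_, fun u => isEmptyElim u, ?_, fun u => isEmptyElim u,
          fun u => isEmptyElim u, fun u => isEmptyElim u⟩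
        · rw [Set.range_eq_empty ι, nhdsSet_empty]
          exact Filter.mem_bot
        · rw [continuous_iff_continuousAt]
          exact fun u => isEmptyElim u
      · set eι := hι.isEmbedding.toHomeomorph with heι
        set ψ : ↥(Set.range ι) → E := fun a => (((eι.symm a : ↥ZT) : ↥TSet) : E × B0).1
          with hψ
        have hψcont : Continuous ψ :=
          continuous_fst.comp (continuous_subtype_val.comp
            (continuous_subtype_val.comp (Homeomorph.continuous eι.symm)))
        have hψrange : Set.range ψ ⊆ (E' : Set E) ∩ H := by
          rintro _ ⟨a, rfl⟩
          exact ⟨((eι.symm a : ↥ZT) : ↥TSet).2, (eι.symm a).2.2⟩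
        obtain ⟨F, hFcont, hFext, hFhull⟩ :=
          dugundji_ext hι.isClosed_range (Set.range_nonempty ι) ψ hψcont
        have hhull : convexHull ℝ (Set.range ψ) ⊆ (E' : Set E) ∩ H :=
          convexHull_min hψrange ((E'.convex).inter (convex_convexHull ℝ _))
        set Φ : M₁ → E × B0 := fun m => (F m, π₁ m) with hΦ
        have hΦcont : Continuous Φ := hFcont.prodMk hπ₁
        have heιsymm : ∀ z : ↥ZT, eι.symm ⟨ι z, mem_range_self z⟩ = z := by
          intro z
          apply hι.isEmbedding.injective
          have h1 : (eι (eι.symm ⟨ι z, mem_range_self z⟩) : M₁) = ι z :=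
            congrArg Subtype.val (eι.apply_symm_apply ⟨ι z, mem_range_self z⟩)
          exact h1
        have hkeyΦ : ∀ z : ↥ZT, Φ (ι z) = ((z : ↥TSet) : E × B0) := by
          intro z
          have h1 : F (ι z) = ψ ⟨ι z, mem_range_self z⟩ := hFext ⟨ι z, mem_range_self z⟩
          have h2 : ψ ⟨ι z, mem_range_self z⟩ = ((z : ↥TSet) : E × B0).1 := by
            rw [hψ]
            simp only
            rw [heιsymm z]
          have h3 : π₁ (ι z) = ((z : ↥TSet) : E × B0).2 := hιfp z
          simp only [hΦ]
          rw [h1, h2, h3]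
        set N : Set M₁ := Φ ⁻¹' Oamb with hN
        have hNopen : IsOpen N := hOamb.preimage hΦcont
        have hNsub : Set.range ι ⊆ N := by
          rintro _ ⟨z, rfl⟩
          have : Φ (ι z) ∈ Oamb := by rw [hkeyΦ z]; exact z.2.1
          exact this
        have hFE' : ∀ m, F m ∈ (E' : Set E) ∩ H := fun m => hhull (hFhull m)
        set rr : ↥N → M₁ := fun n =>
          ι ⟨⟨Φ (n : M₁), (hFE' (n : M₁)).1⟩, ⟨n.2, (hFE' (n : M₁)).2⟩⟩ with hrr
        have hrrcont : Continuous rr := by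
          refine hι.continuous.comp ?_
          refine Continuous.subtype_mk (Continuous.subtype_mk ?_ _) _
          exact hΦcont.comp continuous_subtype_val
        refine ⟨N, hNopen.mem_nhdsSet.2 hNsub, rr, hrrcont, ?_, ?_, ?_⟩
        · exact fun u => mem_range_self _
        · intro u
          have h1 : π₁ (rr u) = πZ ⟨⟨Φ (u : M₁), (hFE' _).1⟩, ⟨u.2, (hFE' _).2⟩⟩ := hιfp _
          rw [h1]
        · rintro u hu
          obtain ⟨z, hz⟩ := hu
          have h1 : (⟨⟨Φ (u : M₁), (hFE' _).1⟩, ⟨u.2, (hFE' _).2⟩⟩ : ↥ZT) = z := by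
            apply Subtype.ext
            apply Subtype.ext
            show Φ (u : M₁) = _
            rw [← hz, hkeyΦ z]
          show rr u = (u : M₁)
          rw [hrr]
          simp only
          rw [h1, hz]
    exact ⟨↥ZT, inferInstance, πZ, hzanr, hwtZ, g, h, ⟨hgcont, fun x => rfl⟩,
      ⟨hhcont, hhfp⟩, hcomp⟩
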